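/- Let E be an exact category with enough projectives and P a projective cover of E. If P has weak exponentials and pseudo simple products, then E has exponentials of projectives: for all objects X, Y of P there exist an object W of E and a morphism e : W × X → Y such that for every object C of E and every morphism f : C × X → Y there is a unique g : C → W with e ∘ (g × id_X) = f. -/

import Mathlib

open CategoryTheory Limits

namespace ExComp

universe v u

variable {E : Type u} [Category.{v} E]

/-- A regular epimorphism, as a property of a morphism. -/
def RegEpi {A B : E} (f : A ⟶ B) : Prop := Nonempty (RegularEpi f)

/-- An object is (regular) projective if its covariant hom functor sends regular
epimorphisms to surjections. -/
def RegProjective (X : E) : Prop :=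
  ∀ ⦃A B : E⦄ (e : A ⟶ B), RegEpi e → ∀ f : X ⟶ B, ∃ g : X ⟶ A, g ≫ e = f

/-- `E` has enough projectives: every object admits a regular epimorphism from a
projective object. -/
def EnoughRegProjectives (E : Type u) [Category.{v} E] : Prop :=
  ∀ A : E, ∃ (X : E) (p : X ⟶ A), RegProjective X ∧ RegEpi p

/-- An internal equivalence relation: a jointly monic, reflexive, symmetric and
transitive pair of parallel arrows. -/
structure IsEquivRelPair {R X : E} (r₁ r₂ : R ⟶ X) : Prop where
  jointlyMono : ∀ ⦃T : E⦄ (h k : T ⟶ R), h ≫ r₁ = k ≫ r₁ → h ≫ r₂ = k ≫ r₂ → h = k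
  refl : ∃ d : X ⟶ R, d ≫ r₁ = 𝟙 X ∧ d ≫ r₂ = 𝟙 X
  symm : ∃ s : R ⟶ R, s ≫ r₁ = r₂ ∧ s ≫ r₂ = r₁
  trans : ∀ ⦃T : E⦄ (p q : T ⟶ R), p ≫ r₂ = q ≫ r₁ →
    ∃ t : T ⟶ R, t ≫ r₁ = p ≫ r₁ ∧ t ≫ r₂ = q ≫ r₂

/-- An exact category: a finitely complete category where every morphism factors as a
regular epi followed by a mono, regular epis are stable under pullback, and every
internal equivalence relation is effective (it is the kernel pair of the coequaliser
it admits). -/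
structure IsExact (E : Type u) [Category.{v} E] [HasFiniteLimits E] : Prop where
  factor : ∀ ⦃A B : E⦄ (f : A ⟶ B), ∃ (I : E) (e : A ⟶ I) (m : I ⟶ B),
    RegEpi e ∧ Mono m ∧ e ≫ m = f
  stable : ∀ ⦃A B C : E⦄ (f : A ⟶ B) (g : C ⟶ B), RegEpi f → RegEpi (pullback.snd f g)
  effective : ∀ ⦃R X : E⦄ (r₁ r₂ : R ⟶ X), IsEquivRelPair r₁ r₂ →
    ∃ (Q : E) (q : X ⟶ Q) (w : r₁ ≫ q = r₂ ≫ q),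
      Nonempty (IsColimit (Cofork.ofπ q w)) ∧ IsPullback r₁ r₂ q q

/-- A projective cover of `E`: a (full sub)collection of objects, each projective,
such that every object of `E` admits a regular epimorphism from one of them. -/
def IsProjectiveCover (P : Set E) : Prop :=
  (∀ X ∈ P, RegProjective X) ∧ ∀ A : E, ∃ X ∈ P, ∃ p : X ⟶ A, RegEpi p

section FinLim
variable [HasFiniteLimits E]

/-- `X` is internally projective: every arrow `T ⨯ X ⟶ B` lifts along a regular epi
`A ↠ B` after passing to a regular epi `U ↠ T`. -/
def InternallyProjective (X : E) : Prop :=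
  ∀ ⦃T A B : E⦄ (e : A ⟶ B), RegEpi e → ∀ f : T ⨯ X ⟶ B,
    ∃ (U : E) (u : U ⟶ T) (g : U ⨯ X ⟶ A), RegEpi u ∧ g ≫ e = prod.map u (𝟙 X) ≫ f

/-- Cartesian closure, as a property: for every object `X` the functor `(−) ⨯ X` has a
right adjoint. -/
def CartesianClosedP (E : Type u) [Category.{v} E] [HasFiniteLimits E] : Prop :=
  ∀ X : E, (prod.functor.flip.obj X).IsLeftAdjoint

/-- Local cartesian closure, as a property: every slice is cartesian closed. -/
def LocallyCartesianClosedP (E : Type u) [Category.{v} E] [HasFiniteLimits E] : Prop :=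
  ∀ (I : E) (F : Over I), ((prod.functor (C := Over I)).flip.obj F).IsLeftAdjoint

end FinLim

/-! ## Weak products and weak simple products -/

/-- A weak product in `P` of `X` and `Y`: a span through which every span in `P`
factors (not necessarily uniquely). -/
structure IsWeakProduct (P : Set E) {X Y V : E} (p : V ⟶ X) (q : V ⟶ Y) : Prop where
  mem : V ∈ P
  lift : ∀ ⦃V' : E⦄, V' ∈ P → ∀ (p' : V' ⟶ X) (q' : V' ⟶ Y),
    ∃ h : V' ⟶ V, h ≫ p = p' ∧ h ≫ q = q'

/-- An arrow out of a weak product is determined by projections if it coequalises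
every pair of arrows (from an object of `P`) coequalised by both projections. -/
def DeterminedByProjections (P : Set E) {V X Y Z : E} (p : V ⟶ X) (q : V ⟶ Y)
    (f : V ⟶ Z) : Prop :=
  ∀ ⦃V' : E⦄, V' ∈ P → ∀ (h k : V' ⟶ V), h ≫ p = k ≫ p → h ≫ q = k ≫ q → h ≫ f = k ≫ f

/-- A candidate diagram for a weak simple product of a span `J ←f Y →g X`. -/
structure WSPCone (P : Set E) {J Y X : E} (f : Y ⟶ J) (g : Y ⟶ X)
    (W V : E) (w : W ⟶ J) (p : V ⟶ W) (q : V ⟶ X) (e : V ⟶ Y) : Prop where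
  memW : W ∈ P
  wp : IsWeakProduct P p q
  det : DeterminedByProjections P p q e
  comm₁ : p ≫ w = e ≫ f
  comm₂ : q = e ≫ g

/-- A weak simple product: a weakly terminal candidate diagram. -/
structure IsWeakSimpleProduct (P : Set E) {J Y X : E} (f : Y ⟶ J) (g : Y ⟶ X)
    (W V : E) (w : W ⟶ J) (p : V ⟶ W) (q : V ⟶ X) (e : V ⟶ Y) : Prop where
  cone : WSPCone P f g W V w p q e
  lift : ∀ ⦃W' V' : E⦄ (w' : W' ⟶ J) (p' : V' ⟶ W') (q' : V' ⟶ X) (e' : V' ⟶ Y),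
    WSPCone P f g W' V' w' p' q' e' →
    ∃ (α : W' ⟶ W) (β : V' ⟶ V),
      α ≫ w = w' ∧ β ≫ p = p' ≫ α ∧ β ≫ q = q' ∧ β ≫ e = e'

/-- `P` has weak simple products. -/
def HasWeakSimpleProducts (P : Set E) : Prop :=
  ∀ ⦃J Y X : E⦄, J ∈ P → Y ∈ P → X ∈ P → ∀ (f : Y ⟶ J) (g : Y ⟶ X),
    ∃ (W V : E) (w : W ⟶ J) (p : V ⟶ W) (q : V ⟶ X) (e : V ⟶ Y),
      IsWeakSimpleProduct P f g W V w p q e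

/-! ## Pseudo simple products -/

/-- A candidate diagram for a pseudo simple product (no determinacy requirement). -/
structure PSPCone (P : Set E) {J Y X : E} (f : Y ⟶ J) (g : Y ⟶ X)
    (W V : E) (w : W ⟶ J) (p : V ⟶ W) (q : V ⟶ X) (e : V ⟶ Y) : Prop where
  memW : W ∈ P
  wp : IsWeakProduct P p q
  comm₁ : p ≫ w = e ≫ f
  comm₂ : q = e ≫ g

/-- A pseudo simple product: a weakly terminal candidate diagram. -/
structure IsPseudoSimpleProduct (P : Set E) {J Y X : E} (f : Y ⟶ J) (g : Y ⟶ X)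
    (W V : E) (w : W ⟶ J) (p : V ⟶ W) (q : V ⟶ X) (e : V ⟶ Y) : Prop where
  cone : PSPCone P f g W V w p q e
  lift : ∀ ⦃W' V' : E⦄ (w' : W' ⟶ J) (p' : V' ⟶ W') (q' : V' ⟶ X) (e' : V' ⟶ Y),
    PSPCone P f g W' V' w' p' q' e' →
    ∃ (α : W' ⟶ W) (β : V' ⟶ V),
      α ≫ w = w' ∧ β ≫ p = p' ≫ α ∧ β ≫ q = q' ∧ β ≫ e = e'

/-- `P` has pseudo simple products. -/
def HasPseudoSimpleProducts (P : Set E) : Prop :=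
  ∀ ⦃J Y X : E⦄, J ∈ P → Y ∈ P → X ∈ P → ∀ (f : Y ⟶ J) (g : Y ⟶ X),
    ∃ (W V : E) (w : W ⟶ J) (p : V ⟶ W) (q : V ⟶ X) (e : V ⟶ Y),
      IsPseudoSimpleProduct P f g W V w p q e

/-! ## Weak exponentials -/

/-- A candidate diagram for a weak exponential of `X` and `Y`. -/
structure WExpCone (P : Set E) {X Y : E} (W V : E) (p : V ⟶ W) (q : V ⟶ X)
    (e : V ⟶ Y) : Prop where
  memW : W ∈ P
  wp : IsWeakProduct P p q
  det : DeterminedByProjections P p q e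

/-- A weak exponential of `X` and `Y` in `P`. -/
structure IsWeakExponential (P : Set E) {X Y : E} (W V : E) (p : V ⟶ W) (q : V ⟶ X)
    (e : V ⟶ Y) : Prop where
  cone : WExpCone P W V p q e
  lift : ∀ ⦃W' V' : E⦄ (p' : V' ⟶ W') (q' : V' ⟶ X) (e' : V' ⟶ Y),
    WExpCone P W' V' p' q' e' →
    ∃ (α : W' ⟶ W) (β : V' ⟶ V), β ≫ p = p' ≫ α ∧ β ≫ q = q' ∧ β ≫ e = e'

/-- `P` has weak exponentials. -/
def HasWeakExponentials (P : Set E) : Prop :=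
  ∀ ⦃X Y : E⦄, X ∈ P → Y ∈ P →
    ∃ (W V : E) (p : V ⟶ W) (q : V ⟶ X) (e : V ⟶ Y), IsWeakExponential P W V p q e

/-- A quasi exponential of `X` and `B`: the weak universal property of an exponential
restricted to projective sources. -/
def IsQuasiExponential [HasFiniteLimits E] (P : Set E) (X : E) {B : E} (W : E)
    (e : W ⨯ X ⟶ B) : Prop :=
  ∀ ⦃Z : E⦄, Z ∈ P → ∀ f : Z ⨯ X ⟶ B, ∃ g : Z ⟶ W, prod.map g (𝟙 X) ≫ e = f

section FinLim2
variable [HasFiniteLimits E]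

/-! ## Pseudo equivalence relations, equalities and generalised weak (simple) products -/

/-- A pseudo equivalence relation: a pair of parallel arrows whose image in `E` is an
equivalence relation. -/
def IsPseudoEquivRel {Y1 Y0 : E} (y₁ y₂ : Y1 ⟶ Y0) : Prop :=
  ∃ (R : E) (e : Y1 ⟶ R) (m : R ⟶ Y0 ⨯ Y0), RegEpi e ∧ Mono m ∧
    e ≫ m = prod.lift y₁ y₂ ∧ IsEquivRelPair (m ≫ prod.fst) (m ≫ prod.snd)

/-- An equality for a weak limit, relative to the comparison arrow `c : V0 ⟶ L` into
the actual limit: a pseudo equivalence relation `v₁, v₂ : V1 ⇉ V0` in `P` such that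
`c` is a coequaliser of `v₁, v₂` and `V1` regularly covers the kernel pair of `c`. -/
structure IsEqualityFor (P : Set E) {V1 V0 L : E} (c : V0 ⟶ L) (v₁ v₂ : V1 ⟶ V0) :
    Prop where
  mem : V1 ∈ P
  per : IsPseudoEquivRel v₁ v₂
  w : v₁ ≫ c = v₂ ≫ c
  coeq : Nonempty (IsColimit (Cofork.ofπ c w))
  cover : RegEpi (pullback.lift v₁ v₂ w)

/-- An arrow `e : V ⟶ Z0` out of a weak product with projections `p, q` preserves
projections with respect to a pseudo equivalence relation `z₁, z₂ : Z1 ⇉ Z0` if for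
any equality `v₁, v₂ : V1 ⇉ V` for the weak product there is `t : V1 ⟶ Z1` with
`t ≫ zᵢ = vᵢ ≫ e`. -/
def PreservesProjWP (P : Set E) {V X Y Z1 Z0 : E} (p : V ⟶ X) (q : V ⟶ Y)
    (z₁ z₂ : Z1 ⟶ Z0) (e : V ⟶ Z0) : Prop :=
  ∀ ⦃V1 : E⦄ (v₁ v₂ : V1 ⟶ V), IsEqualityFor P (prod.lift p q) v₁ v₂ →
    ∃ t : V1 ⟶ Z1, t ≫ z₁ = v₁ ≫ e ∧ t ≫ z₂ = v₂ ≫ e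

/-- A candidate diagram for a generalised weak simple product of `f` and `g` with
respect to the pseudo equivalence relation `y₁, y₂`. -/
structure GWSPCone (P : Set E) {Y1 Y0 J X : E} (y₁ y₂ : Y1 ⟶ Y0) (f : Y0 ⟶ J)
    (g : Y0 ⟶ X) (W V : E) (w : W ⟶ J) (p : V ⟶ W) (q : V ⟶ X) (e : V ⟶ Y0) :
    Prop where
  memW : W ∈ P
  wp : IsWeakProduct P p q
  pres : PreservesProjWP P p q y₁ y₂ e
  comm₁ : p ≫ w = e ≫ f
  comm₂ : q = e ≫ g

/-- A generalised weak simple product: a weakly terminal candidate diagram. -/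
structure IsGWSP (P : Set E) {Y1 Y0 J X : E} (y₁ y₂ : Y1 ⟶ Y0) (f : Y0 ⟶ J)
    (g : Y0 ⟶ X) (W V : E) (w : W ⟶ J) (p : V ⟶ W) (q : V ⟶ X) (e : V ⟶ Y0) :
    Prop where
  cone : GWSPCone P y₁ y₂ f g W V w p q e
  lift : ∀ ⦃W' V' : E⦄ (w' : W' ⟶ J) (p' : V' ⟶ W') (q' : V' ⟶ X) (e' : V' ⟶ Y0),
    GWSPCone P y₁ y₂ f g W' V' w' p' q' e' →
    ∃ (α : W' ⟶ W) (β : V' ⟶ V),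
      α ≫ w = w' ∧ β ≫ p = p' ≫ α ∧ β ≫ q = q' ∧ β ≫ e = e'

/-- `P` has generalised weak simple products. -/
def HasGWSP (P : Set E) : Prop :=
  ∀ ⦃Y1 Y0 J X : E⦄, Y1 ∈ P → Y0 ∈ P → J ∈ P → X ∈ P →
    ∀ (y₁ y₂ : Y1 ⟶ Y0), IsPseudoEquivRel y₁ y₂ →
    ∀ (f : Y0 ⟶ J) (g : Y0 ⟶ X), y₁ ≫ f = y₂ ≫ f → y₁ ≫ g = y₂ ≫ g →
    ∃ (W V : E) (w : W ⟶ J) (p : V ⟶ W) (q : V ⟶ X) (e : V ⟶ Y0),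
      IsGWSP P y₁ y₂ f g W V w p q e

/-- A candidate diagram for a generalised weak exponential of `X` and `y₁, y₂`. -/
structure GWExpCone (P : Set E) {X Y1 Y0 : E} (y₁ y₂ : Y1 ⟶ Y0)
    (W V : E) (p : V ⟶ W) (q : V ⟶ X) (e : V ⟶ Y0) : Prop where
  memW : W ∈ P
  wp : IsWeakProduct P p q
  pres : PreservesProjWP P p q y₁ y₂ e

/-- A generalised weak exponential of `X` and a pseudo equivalence relation. -/
structure IsGWExp (P : Set E) {X Y1 Y0 : E} (y₁ y₂ : Y1 ⟶ Y0)
    (W V : E) (p : V ⟶ W) (q : V ⟶ X) (e : V ⟶ Y0) : Prop where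
  cone : GWExpCone P y₁ y₂ W V p q e
  lift : ∀ ⦃W' V' : E⦄ (p' : V' ⟶ W') (q' : V' ⟶ X) (e' : V' ⟶ Y0),
    GWExpCone P y₁ y₂ W' V' p' q' e' →
    ∃ (α : W' ⟶ W) (β : V' ⟶ V), β ≫ p = p' ≫ α ∧ β ≫ q = q' ∧ β ≫ e = e'

/-! ## Weak pullbacks and generalised weak dependent products -/

/-- A weak pullback in `P` of the cospan `X →f J ←w W`. -/
structure IsWeakPullback (P : Set E) {X J W V : E} (f : X ⟶ J) (w : W ⟶ J)
    (a : V ⟶ X) (b : V ⟶ W) : Prop where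
  mem : V ∈ P
  comm : a ≫ f = b ≫ w
  lift : ∀ ⦃V' : E⦄, V' ∈ P → ∀ (a' : V' ⟶ X) (b' : V' ⟶ W), a' ≫ f = b' ≫ w →
    ∃ h : V' ⟶ V, h ≫ a = a' ∧ h ≫ b = b'

/-- Preservation of projections for an arrow out of a weak pullback. -/
def PreservesProjWPB (P : Set E) {V X J W Z1 Z0 : E} (f : X ⟶ J) (w : W ⟶ J)
    (a : V ⟶ X) (b : V ⟶ W) (h : a ≫ f = b ≫ w) (z₁ z₂ : Z1 ⟶ Z0) (e : V ⟶ Z0) :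
    Prop :=
  ∀ ⦃V1 : E⦄ (v₁ v₂ : V1 ⟶ V), IsEqualityFor P (pullback.lift a b h) v₁ v₂ →
    ∃ t : V1 ⟶ Z1, t ≫ z₁ = v₁ ≫ e ∧ t ≫ z₂ = v₂ ≫ e

/-- A candidate diagram for a generalised weak dependent product of `g : Y0 ⟶ X`
along `f : X ⟶ J` with respect to `y₁, y₂`. -/
structure GWDPCone (P : Set E) {Y1 Y0 X J : E} (y₁ y₂ : Y1 ⟶ Y0) (g : Y0 ⟶ X)
    (f : X ⟶ J) (W V : E) (w : W ⟶ J) (a : V ⟶ X) (b : V ⟶ W) (e : V ⟶ Y0) :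
    Prop where
  memW : W ∈ P
  comm : a ≫ f = b ≫ w
  wpb : IsWeakPullback P f w a b
  overX : e ≫ g = a
  pres : PreservesProjWPB P f w a b comm y₁ y₂ e

/-- A generalised weak dependent product: a weakly terminal candidate diagram. -/
structure IsGWDP (P : Set E) {Y1 Y0 X J : E} (y₁ y₂ : Y1 ⟶ Y0) (g : Y0 ⟶ X)
    (f : X ⟶ J) (W V : E) (w : W ⟶ J) (a : V ⟶ X) (b : V ⟶ W) (e : V ⟶ Y0) :
    Prop where
  cone : GWDPCone P y₁ y₂ g f W V w a b e
  lift : ∀ ⦃W' V' : E⦄ (w' : W' ⟶ J) (a' : V' ⟶ X) (b' : V' ⟶ W') (e' : V' ⟶ Y0),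
    GWDPCone P y₁ y₂ g f W' V' w' a' b' e' →
    ∃ (α : W' ⟶ W) (β : V' ⟶ V),
      α ≫ w = w' ∧ β ≫ a = a' ∧ β ≫ b = b' ≫ α ∧ β ≫ e = e'

/-- `P` has generalised weak dependent products (i.e. `P` is weakly locally cartesian
closed). -/
def HasGWDP (P : Set E) : Prop :=
  ∀ ⦃Y1 Y0 X J : E⦄, Y1 ∈ P → Y0 ∈ P → X ∈ P → J ∈ P →
    ∀ (y₁ y₂ : Y1 ⟶ Y0), IsPseudoEquivRel y₁ y₂ →
    ∀ (g : Y0 ⟶ X) (f : X ⟶ J), y₁ ≫ g = y₂ ≫ g →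
    ∃ (W V : E) (w : W ⟶ J) (a : V ⟶ X) (b : V ⟶ W) (e : V ⟶ Y0),
      IsGWDP P y₁ y₂ g f W V w a b e

/-! ## The functor `w_X` on subobjects induced by weak simple products -/

/-- The adjunction property of the weak-simple-product operation `w_X` on subobjects:
for every subobject `a : A ↪ J ⨯ X`, every `P`-cover `Y ↠ A`, every weak simple
product `W → J` of the induced span and every image factorisation `W ↠ I ↪ J` of it,
the subobject `I ↪ J` is a value at `a` of a right adjoint to
`(−) ⨯ X : Sub(J) → Sub(J ⨯ X)`. -/
def WAdj (P : Set E) (J X : E) : Prop :=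
  ∀ ⦃A : E⦄ (a : A ⟶ J ⨯ X), Mono a →
  ∀ ⦃Y : E⦄, Y ∈ P → ∀ (c : Y ⟶ A), RegEpi c →
  ∀ ⦃W V : E⦄ (w : W ⟶ J) (p : V ⟶ W) (q : V ⟶ X) (e : V ⟶ Y),
    IsWeakSimpleProduct P (c ≫ a ≫ prod.fst) (c ≫ a ≫ prod.snd) W V w p q e →
  ∀ ⦃I : E⦄ (ew : W ⟶ I) (m : I ⟶ J), RegEpi ew → Mono m → ew ≫ m = w →
  ∀ ⦃B : E⦄ (b : B ⟶ J), Mono b →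
    ((∃ t : B ⨯ X ⟶ A, t ≫ a = prod.map b (𝟙 X)) ↔ ∃ s : B ⟶ I, s ≫ m = b)

/-! ## Weak dependent products (à la Carboni–Rosolini) -/

/-- `P` has weak dependent products: for `f : X ⟶ J` and `g : Y ⟶ X` in `P` there are
`w : W ⟶ J` in `P` and a surjection `Hom_{P/J}(h, w) → Hom_{P/X}(f*(h), g)` natural
in `h ∈ P/J`. -/
def HasWeakDependentProducts (P : Set E) : Prop :=
  ∀ ⦃X J Y : E⦄, X ∈ P → J ∈ P → Y ∈ P → ∀ (f : X ⟶ J) (g : Y ⟶ X),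
    ∃ (W : E) (_ : W ∈ P) (w : W ⟶ J)
      (ε : ∀ ⦃T : E⦄, T ∈ P → ∀ (h : T ⟶ J) (k : T ⟶ W), k ≫ w = h →
        (pullback h f ⟶ Y)),
      (∀ ⦃T : E⦄ (hT : T ∈ P) (h : T ⟶ J) (k : T ⟶ W) (hk : k ≫ w = h),
         ε hT h k hk ≫ g = pullback.snd h f) ∧
      (∀ ⦃T : E⦄ (hT : T ∈ P) (h : T ⟶ J) (d : pullback h f ⟶ Y),
         d ≫ g = pullback.snd h f → ∃ (k : T ⟶ W) (hk : k ≫ w = h), ε hT h k hk = d) ∧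
      (∀ ⦃T' T : E⦄ (hT' : T' ∈ P) (hT : T ∈ P) (u : T' ⟶ T) (h : T ⟶ J) (k : T ⟶ W)
         (hk : k ≫ w = h),
         ε hT' (u ≫ h) (u ≫ k) (by rw [Category.assoc, hk]) =
           pullback.map (u ≫ h) f h f u (𝟙 X) (𝟙 J) (by simp) (by simp) ≫ ε hT h k hk)

end FinLim2

attribute [local simp] prod.lift_fst prod.lift_snd prod.lift_fst_assoc prod.lift_snd_assoc
attribute [local simp] pullback.lift_fst pullback.lift_snd pullback.lift_fst_assoc pullback.lift_snd_assoc

section Helpers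
lemma RegEpi.epi {A B : E} {f : A ⟶ B} (h : RegEpi f) : Epi f := by
  obtain ⟨h⟩ := h
  exact RegularEpi.epi f h

lemma RegEpi.strong {A B : E} {f : A ⟶ B} (h : RegEpi f) : StrongEpi f := by
  obtain ⟨h⟩ := h
  haveI := isRegularEpi_of_regularEpi h
  exact inferInstance

/-- descent along a regular epi -/
lemma RegEpi.desc {A B C : E} {f : A ⟶ B} (hf : RegEpi f) (g : A ⟶ C)
    (H : ∀ ⦃T : E⦄ (h k : T ⟶ A), h ≫ f = k ≫ f → h ≫ g = k ≫ g) :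
    ∃ l : B ⟶ C, f ≫ l = g := by
  obtain ⟨hf⟩ := hf
  obtain ⟨l, hl⟩ := RegularEpi.desc' hf g (H _ _ hf.w)
  exact ⟨l, hl⟩

/-- factor through a mono after a strong epi -/
lemma fac_mono_of_strongEpi {T A M B : E} (z : T ⟶ A) (hz : StrongEpi z) {m : M ⟶ B}
    (hm : Mono m) (b : A ⟶ B) (s : T ⟶ M) (fac : s ≫ m = z ≫ b) :
    ∃ d : A ⟶ M, d ≫ m = b ∧ z ≫ d = s := by
  haveI := hz
  haveI := hm
  have sq : CommSq s z m b := ⟨fac⟩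
  exact ⟨sq.lift, sq.fac_right, sq.fac_left⟩

lemma isIso_of_mono_fac {T M B : E} {t : T ⟶ B} (ht : StrongEpi t) {s : T ⟶ M} {m : M ⟶ B}
    (hm : Mono m) (fac : s ≫ m = t) : IsIso m := by
  obtain ⟨d, hd, -⟩ := fac_mono_of_strongEpi t ht hm (𝟙 B) s (by simpa using fac)
  haveI := hm
  refine ⟨d, ?_, hd⟩
  rw [← cancel_mono m]
  simp [hd]

lemma RegEpi.comp_iso {A B C : E} {f : A ⟶ B} (hf : RegEpi f) (g : B ⟶ C) [IsIso g] :
    RegEpi (f ≫ g) := by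
  obtain ⟨hf⟩ := hf
  exact ⟨{ W := hf.W
           left := hf.left
           right := hf.right
           w := by rw [← Category.assoc, ← Category.assoc, hf.w]
           isColimit := by
            refine Cofork.IsColimit.mk _ (fun s => inv g ≫ hf.isColimit.desc
              (Cofork.ofπ (s.π) (by simpa using s.condition))) (fun s => ?_) (fun s l hl => ?_)
            · simp only [Cofork.π_ofπ, Category.assoc]
              rw [IsIso.hom_inv_id_assoc]
              exact hf.isColimit.fac _ WalkingParallelPair.one
            · have : f ≫ g ≫ l = s.π := by simpa using hl
              rw [IsIso.eq_inv_comp]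
              refine Cofork.IsColimit.hom_ext hf.isColimit ?_
              have h2 := Cofork.IsColimit.π_desc hf.isColimit
                (t := Cofork.ofπ (s.π) (by simpa using s.condition))
              simp only [Cofork.π_ofπ] at h2 ⊢
              rw [this, h2] }⟩


lemma iso_comp_regEpi {A B C : E} (f : A ⟶ B) [IsIso f] {g : B ⟶ C} (hg : RegEpi g) :
    RegEpi (f ≫ g) := by
  obtain ⟨hg⟩ := hg
  refine ⟨{ W := hg.W
            left := hg.left ≫ inv f
            right := hg.right ≫ inv f
            w := by simp [hg.w]
            isColimit := ?_ }⟩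
  refine Cofork.IsColimit.mk _ (fun s => hg.isColimit.desc
    (Cofork.ofπ (inv f ≫ s.π) ?_)) (fun s => ?_) (fun s l hl => ?_)
  · have := s.condition
    simp only [Cofork.π_ofπ, Category.assoc] at this ⊢
    exact this
  · have h2 := Cofork.IsColimit.π_desc hg.isColimit
      (t := Cofork.ofπ (inv f ≫ s.π) (by
        have := s.condition
        simp only [Cofork.π_ofπ, Category.assoc] at this ⊢
        exact this))
    simp only [Cofork.π_ofπ] at h2 ⊢
    rw [Category.assoc, h2, IsIso.hom_inv_id_assoc]
  · have : (f ≫ g) ≫ l = s.π := by simpa using hl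
    refine Cofork.IsColimit.hom_ext hg.isColimit ?_
    have h2 := Cofork.IsColimit.π_desc hg.isColimit
      (t := Cofork.ofπ (inv f ≫ s.π) (by
        have := s.condition
        simp only [Cofork.π_ofπ, Category.assoc] at this ⊢
        exact this))
    simp only [Cofork.π_ofπ] at h2 ⊢
    rw [h2, ← this, IsIso.eq_inv_comp]
    simp

section HExact
variable [HasFiniteLimits E]

lemma regEpi_of_strongEpi (hE : IsExact E) {A B : E} {f : A ⟶ B} (hf : StrongEpi f) :
    RegEpi f := by
  obtain ⟨I, e, m, he, hm, fac⟩ := hE.factor f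
  haveI : IsIso m := isIso_of_mono_fac hf hm fac
  rw [← fac]
  exact he.comp_iso m

lemma regEpi_comp (hE : IsExact E) {A B C : E} {f : A ⟶ B} {g : B ⟶ C}
    (hf : RegEpi f) (hg : RegEpi g) : RegEpi (f ≫ g) := by
  haveI := hf.strong
  haveI := hg.strong
  exact regEpi_of_strongEpi hE (strongEpi_comp f g)

/-- the square `fst ≫ f = prod.map f 𝟙 ≫ fst` is a pullback. -/
lemma isPullback_prodMap {A B X : E} (f : A ⟶ B) :
    IsPullback prod.fst (prod.map f (𝟙 X)) f prod.fst := by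
  refine IsPullback.of_isLimit' ⟨by simp⟩ ?_
  refine PullbackCone.IsLimit.mk _ (fun s => prod.lift s.fst (s.snd ≫ prod.snd))
    (fun s => by simp) (fun s => ?_) (fun s l h1 h2 => ?_)
  · ext <;> simp
    exact s.condition
  · ext
    · simpa using h1
    · have := h2 =≫ prod.snd
      simpa using this

lemma regEpi_prodMap (hE : IsExact E) {A B : E} (X : E) {f : A ⟶ B} (hf : RegEpi f) :
    RegEpi (prod.map f (𝟙 X)) := by
  have hpb := isPullback_prodMap (X := X) f
  have hs : RegEpi (pullback.snd f (prod.fst : B ⨯ X ⟶ B)) := hE.stable f prod.fst hf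
  have : prod.map f (𝟙 X) = hpb.isoPullback.hom ≫ pullback.snd f prod.fst := by
    simp
  rw [this]
  exact iso_comp_regEpi _ hs

end HExact
end Helpers


section Mid
variable [HasFiniteLimits E]

lemma weakProduct_of_cover {P : Set E} (hP : IsProjectiveCover P) {T A B : E}
    (hT : T ∈ P) (t : T ⟶ A ⨯ B) (ht : RegEpi t) :
    IsWeakProduct P (t ≫ prod.fst) (t ≫ prod.snd) := by
  refine ⟨hT, fun V' hV' p' q' => ?_⟩
  obtain ⟨h, hh⟩ := hP.1 V' hV' t ht (prod.lift p' q')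
  exact ⟨h, by rw [← Category.assoc, hh]; simp, by rw [← Category.assoc, hh]; simp⟩

lemma regEpi_lift_of_weakProduct (hE : IsExact E) {P : Set E} (hP : IsProjectiveCover P)
    {V A B : E} {p : V ⟶ A} {q : V ⟶ B} (wp : IsWeakProduct P p q) :
    RegEpi (prod.lift p q) := by
  obtain ⟨T, hT, t, ht⟩ := hP.2 (A ⨯ B)
  obtain ⟨h, h1, h2⟩ := wp.lift hT (t ≫ prod.fst) (t ≫ prod.snd)
  have hfac : h ≫ prod.lift p q = t := by
    ext
    · simpa using h1
    · simpa using h2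
  obtain ⟨I, e, m, he, hm, fac⟩ := hE.factor (prod.lift p q)
  haveI : IsIso m := isIso_of_mono_fac ht.strong hm
    (by rw [Category.assoc, fac, hfac])
  rw [← fac]
  exact he.comp_iso m

/-- From a weak exponential, a quasi-exponential. -/
lemma quasiExp_of_weakExp (hE : IsExact E) {P : Set E} (hP : IsProjectiveCover P)
    {X Y W₀ V : E} {p : V ⟶ W₀} {q : V ⟶ X} {e : V ⟶ Y}
    (hwe : IsWeakExponential P W₀ V p q e) :
    ∃ ev₀ : W₀ ⨯ X ⟶ Y,
      ∀ ⦃Z : E⦄, Z ∈ P → ∀ f : Z ⨯ X ⟶ Y, ∃ g : Z ⟶ W₀, prod.map g (𝟙 X) ≫ ev₀ = f := by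
  have hpq : RegEpi (prod.lift p q) := regEpi_lift_of_weakProduct hE hP hwe.cone.wp
  -- descend e along ⟨p, q⟩
  obtain ⟨ev₀, hev₀⟩ := hpq.desc e (by
    intro T h k hhk
    obtain ⟨T', hT', κ, hκ⟩ := hP.2 T
    have h1 : h ≫ p = k ≫ p := by
      have := hhk =≫ prod.fst; simpa using this
    have h2 : h ≫ q = k ≫ q := by
      have := hhk =≫ prod.snd; simpa using this
    have hdet := hwe.cone.det hT' (κ ≫ h) (κ ≫ k)
      (by simp only [Category.assoc, h1]) (by simp only [Category.assoc, h2])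
    haveI := hκ.epi
    rw [← cancel_epi κ]
    simpa using hdet)
  refine ⟨ev₀, fun Z hZ f => ?_⟩
  obtain ⟨V', hV', v, hv⟩ := hP.2 (Z ⨯ X)
  have wp' : IsWeakProduct P (v ≫ prod.fst) (v ≫ prod.snd) :=
    weakProduct_of_cover hP hV' v hv
  have det' : DeterminedByProjections P (v ≫ prod.fst) (v ≫ prod.snd) (v ≫ f) := by
    intro V'' _ h k h1 k1
    have : h ≫ v = k ≫ v := by
      ext
      · simpa using h1
      · simpa using k1
    rw [← Category.assoc, this, Category.assoc]
  obtain ⟨α, β, hβp, hβq, hβe⟩ := hwe.lift (v ≫ prod.fst) (v ≫ prod.snd) (v ≫ f)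
    ⟨hZ, wp', det'⟩
  refine ⟨α, ?_⟩
  haveI := hv.epi
  rw [← cancel_epi v]
  have : v ≫ prod.map α (𝟙 X) = β ≫ prod.lift p q := by
    ext
    · simpa using hβp.symm
    · simpa using hβq.symm
  rw [← Category.assoc, this, Category.assoc, hev₀, hβe]

/-- Universal quantification of subobjects along `– ⨯ X`, from pseudo simple products. -/
lemma forallSub (hE : IsExact E) {P : Set E} (hP : IsProjectiveCover P)
    (hpsp : HasPseudoSimpleProducts P) {X : E} (hX : X ∈ P) {B A : E} (a : A ⟶ B ⨯ X)
    (ha : Mono a) :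
    ∃ (I : E) (mI : I ⟶ B), Mono mI ∧
      ∀ ⦃T : E⦄ (b : T ⟶ B),
        (∃ u : T ⨯ X ⟶ A, u ≫ a = prod.map b (𝟙 X)) ↔ ∃ s : T ⟶ I, s ≫ mI = b := by
  haveI := ha
  obtain ⟨J, hJ, j, hj⟩ := hP.2 B
  set pb := pullback (prod.map j (𝟙 X)) a with hpb
  set a' : pb ⟶ J ⨯ X := pullback.fst _ _ with ha'
  obtain ⟨Y₀, hY₀, c, hc⟩ := hP.2 pb
  obtain ⟨W, V, w, p, q, e, psp⟩ := hpsp hJ hY₀ hX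
    (c ≫ a' ≫ prod.fst) (c ≫ a' ≫ prod.snd)
  obtain ⟨I, ew, mI, hew, hmI, hfac⟩ := hE.factor (w ≫ j)
  haveI := hmI
  -- the key map τ : I ⨯ X ⟶ A
  have hca' : e ≫ c ≫ a' = prod.lift (p ≫ w) q := by
    ext
    · simp only [Category.assoc, prod.lift_fst]
      exact psp.cone.comm₁.symm
    · simp only [Category.assoc, prod.lift_snd]
      exact psp.cone.comm₂.symm
  have hδa : (e ≫ c ≫ pullback.snd (prod.map j (𝟙 X)) a) ≫ a
      = prod.lift (p ≫ ew) q ≫ prod.map mI (𝟙 X) := by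
    calc (e ≫ c ≫ pullback.snd (prod.map j (𝟙 X)) a) ≫ a
        = (e ≫ c ≫ a') ≫ prod.map j (𝟙 X) := by
          simp only [Category.assoc, ← pullback.condition]
          rfl
      _ = prod.lift (p ≫ w) q ≫ prod.map j (𝟙 X) := by rw [hca']
      _ = prod.lift (p ≫ ew) q ≫ prod.map mI (𝟙 X) := by
          ext
          · simp [hfac]
          · simp
  have hρ : RegEpi (prod.lift (p ≫ ew) q) := by
    have h1 : RegEpi (prod.lift p q) := regEpi_lift_of_weakProduct hE hP psp.cone.wp
    have h2 : RegEpi (prod.map ew (𝟙 X)) := regEpi_prodMap hE X hew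
    have : prod.lift (p ≫ ew) q = prod.lift p q ≫ prod.map ew (𝟙 X) := by ext <;> simp
    rw [this]
    exact regEpi_comp hE h1 h2
  obtain ⟨τ, hτ⟩ := hρ.desc (e ≫ c ≫ pullback.snd (prod.map j (𝟙 X)) a) (by
    intro T h k hhk
    rw [← cancel_mono a]
    have e1 := congrArg (fun t => h ≫ t) hδa
    have e2 := congrArg (fun t => k ≫ t) hδa
    simp only [Category.assoc] at e1 e2 ⊢
    rw [e1, e2, ← Category.assoc, ← Category.assoc, hhk])
  have hτa : τ ≫ a = prod.map mI (𝟙 X) := by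
    haveI := hρ.epi
    rw [← cancel_epi (prod.lift (p ≫ ew) q), ← Category.assoc, hτ, hδa]
  refine ⟨I, mI, hmI, fun T b => ⟨fun ⟨u, hu⟩ => ?_, fun ⟨s, hs⟩ => ?_⟩⟩
  · -- forward: b ⨯ X ≤ A implies b factors through I
    obtain ⟨Z, hZ, z, hz⟩ := hP.2 T
    -- lift z ≫ b along j
    obtain ⟨uJ, huJ⟩ := hP.1 Z hZ j hj (z ≫ b)
    obtain ⟨V', hV', v, hv⟩ := hP.2 (Z ⨯ X)
    have hu' : (prod.map z (𝟙 X) ≫ u) ≫ a = prod.map (z ≫ b) (𝟙 X) := by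
      rw [Category.assoc, hu, prod.map_map, Category.comp_id]
    have hcond : prod.lift (v ≫ prod.fst ≫ uJ) (v ≫ prod.snd) ≫ prod.map j (𝟙 X)
        = (v ≫ prod.map z (𝟙 X) ≫ u) ≫ a := by
      rw [Category.assoc, Category.assoc, hu, ← Category.assoc, prod.map_map]
      ext
      · simp [huJ]
      · simp
    set μ : V' ⟶ pb := pullback.lift _ _ hcond with hμ
    obtain ⟨e', he'⟩ := hP.1 V' hV' c hc μ
    have hcone : PSPCone P (c ≫ a' ≫ prod.fst) (c ≫ a' ≫ prod.snd) Z V' uJ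
        (v ≫ prod.fst) (v ≫ prod.snd) e' := by
      refine ⟨hZ, weakProduct_of_cover hP hV' v hv, ?_, ?_⟩
      · rw [show e' ≫ c ≫ a' ≫ prod.fst = (e' ≫ c) ≫ a' ≫ prod.fst from by simp, he']
        simp [hμ, ha']
      · rw [show e' ≫ c ≫ a' ≫ prod.snd = (e' ≫ c) ≫ a' ≫ prod.snd from by simp, he']
        simp [hμ, ha']
    obtain ⟨α, β, hαw, -, -, -⟩ := psp.lift uJ (v ≫ prod.fst) (v ≫ prod.snd) e' hcone
    have hs₀ : (α ≫ ew) ≫ mI = z ≫ b := by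
      rw [Category.assoc, hfac, ← Category.assoc, hαw, huJ]
    obtain ⟨d, hd, -⟩ := fac_mono_of_strongEpi z hz.strong hmI b (α ≫ ew) hs₀
    exact ⟨d, hd⟩
  · -- backward: factor through I implies b ⨯ X ≤ A
    refine ⟨prod.map s (𝟙 X) ≫ τ, ?_⟩
    rw [Category.assoc, hτa, prod.map_map, Category.comp_id, hs]


lemma prodMap_comp_ev {A B C X Y : E} (t : A ⟶ B) (b : B ⟶ C) (ev : C ⨯ X ⟶ Y) :
    prod.map (t ≫ b) (𝟙 X) ≫ ev = prod.map t (𝟙 X) ≫ prod.map b (𝟙 X) ≫ ev := by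
  rw [← Category.assoc, prod.map_map, Category.comp_id]

lemma lift_map_decomp {T W X : E} (h : T ⟶ W ⨯ X) :
    prod.lift (𝟙 T) (h ≫ prod.snd) ≫ prod.map (h ≫ prod.fst) (𝟙 X) = h := by
  ext <;> simp

end Mid

/-- If `P` has weak exponentials and pseudo simple products, then `E`
has exponentials of projectives. -/
theorem stmt10 {E : Type u} [Category.{v} E] [HasFiniteLimits E]
    (hE : IsExact E) (P : Set E) (hP : IsProjectiveCover P)
    (hwe : HasWeakExponentials P) (hpsp : HasPseudoSimpleProducts P) :
    ∀ X ∈ P, ∀ Y ∈ P, ∃ (W : E) (e : W ⨯ X ⟶ Y),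
      ∀ (C : E) (f : C ⨯ X ⟶ Y), ∃! g : C ⟶ W, prod.map g (𝟙 X) ≫ e = f := by

  intro X hX Y hY
  obtain ⟨W₀, V, p, q, e, hwe'⟩ := hwe hX hY
  obtain ⟨ev₀, hqe⟩ := quasiExp_of_weakExp hE hP hwe'
  have hcond : ∀ ⦃T : E⦄ (b : T ⟶ W₀ ⨯ W₀),
      prod.map b (𝟙 X) ≫ (prod.map prod.fst (𝟙 X) ≫ ev₀)
        = prod.map (b ≫ prod.fst) (𝟙 X) ≫ ev₀ := fun T b =>
    (prodMap_comp_ev b prod.fst ev₀).symm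
  have hcond' : ∀ ⦃T : E⦄ (b : T ⟶ W₀ ⨯ W₀),
      prod.map b (𝟙 X) ≫ (prod.map prod.snd (𝟙 X) ≫ ev₀)
        = prod.map (b ≫ prod.snd) (𝟙 X) ≫ ev₀ := fun T b =>
    (prodMap_comp_ev b prod.snd ev₀).symm
  obtain ⟨R, mI, hmI, hchar⟩ := forallSub hE hP hpsp hX
    (equalizer.ι (prod.map prod.fst (𝟙 X) ≫ ev₀) (prod.map prod.snd (𝟙 X) ≫ ev₀))
    inferInstance
  haveI := hmI
  have char : ∀ ⦃T : E⦄ (b : T ⟶ W₀ ⨯ W₀),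
      (prod.map (b ≫ prod.fst) (𝟙 X) ≫ ev₀ = prod.map (b ≫ prod.snd) (𝟙 X) ≫ ev₀)
        ↔ ∃ t : T ⟶ R, t ≫ mI = b := by
    intro T b
    rw [← hchar b]
    constructor
    · intro h
      exact ⟨equalizer.lift (prod.map b (𝟙 X)) (by rw [hcond b, hcond' b]; exact h),
        equalizer.lift_ι _ _⟩
    · rintro ⟨u, hu⟩
      rw [← hcond b, ← hcond' b, ← hu, Category.assoc, Category.assoc,
        equalizer.condition]
  have relmI : prod.map (mI ≫ prod.fst) (𝟙 X) ≫ ev₀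
      = prod.map (mI ≫ prod.snd) (𝟙 X) ≫ ev₀ :=
    (char mI).mpr ⟨𝟙 R, Category.id_comp mI⟩
  have relcomp : ∀ ⦃T : E⦄ (t : T ⟶ R),
      prod.map (t ≫ mI ≫ prod.fst) (𝟙 X) ≫ ev₀
        = prod.map (t ≫ mI ≫ prod.snd) (𝟙 X) ≫ ev₀ := by
    intro T t
    rw [prodMap_comp_ev t (mI ≫ prod.fst) ev₀, prodMap_comp_ev t (mI ≫ prod.snd) ev₀,
      relmI]
  have hrel : IsEquivRelPair (mI ≫ prod.fst) (mI ≫ prod.snd) := by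
    constructor
    · intro T h k h1 h2
      rw [← cancel_mono mI]
      ext
      · simpa using h1
      · simpa using h2
    · obtain ⟨d, hd⟩ := (char (prod.lift (𝟙 W₀) (𝟙 W₀))).mp (by simp)
      exact ⟨d, by rw [← Category.assoc, hd]; simp,
        by rw [← Category.assoc, hd]; simp⟩
    · obtain ⟨s, hs⟩ := (char (prod.lift (mI ≫ prod.snd) (mI ≫ prod.fst))).mp
        (by simp only [prod.lift_fst, prod.lift_snd]; exact relmI.symm)
      exact ⟨s, by rw [← Category.assoc, hs]; simp,
        by rw [← Category.assoc, hs]; simp⟩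
    · intro T pp qq hpq
      have h1 := relcomp pp
      have h2 := relcomp qq
      obtain ⟨t, ht⟩ := (char (prod.lift (pp ≫ mI ≫ prod.fst) (qq ≫ mI ≫ prod.snd))).mp
        (by
          simp only [prod.lift_fst, prod.lift_snd]
          rw [h1]
          rw [show pp ≫ mI ≫ prod.snd = qq ≫ mI ≫ prod.fst from hpq, h2])
      refine ⟨t, ?_, ?_⟩
      · rw [← Category.assoc, ht]
        simp only [prod.lift_fst]
      · rw [← Category.assoc, ht]
        simp only [prod.lift_snd]
  obtain ⟨Q, qW, wq, ⟨hcolim⟩, hpb⟩ := hE.effective _ _ hrel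
  have hqW : RegEpi qW :=
    ⟨{ W := R, left := mI ≫ prod.fst, right := mI ≫ prod.snd, w := wq,
       isColimit := hcolim }⟩
  have wq2 : mI ≫ prod.fst ≫ qW = mI ≫ prod.snd ≫ qW := by
    simpa only [Category.assoc] using wq
  obtain ⟨ev, hev⟩ := (regEpi_prodMap hE X hqW).desc ev₀ (by
    intro T h k hhk
    have hf : (h ≫ prod.fst) ≫ qW = (k ≫ prod.fst) ≫ qW := by
      have h3 := hhk =≫ prod.fst
      simpa using h3
    have hsnd : h ≫ prod.snd = k ≫ prod.snd := by
      have h3 := hhk =≫ prod.snd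
      simpa using h3
    have hu1 := hpb.lift_fst (h ≫ prod.fst) (k ≫ prod.fst) hf
    have hu2 := hpb.lift_snd (h ≫ prod.fst) (k ≫ prod.fst) hf
    have rel := relcomp (hpb.lift (h ≫ prod.fst) (k ≫ prod.fst) hf)
    rw [hu1, hu2] at rel
    rw [← lift_map_decomp h, ← lift_map_decomp k, Category.assoc, Category.assoc,
      rel, hsnd])
  refine ⟨Q, ev, fun C f => ?_⟩
  obtain ⟨Z, hZ, z, hz⟩ := hP.2 C
  obtain ⟨g₀, hg₀⟩ := hqe hZ (prod.map z (𝟙 X) ≫ f)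
  obtain ⟨g, hg⟩ := hz.desc (g₀ ≫ qW) (by
    intro T h k hhk
    obtain ⟨t, ht⟩ := (char (prod.lift (h ≫ g₀) (k ≫ g₀))).mp (by
      simp only [prod.lift_fst, prod.lift_snd]
      rw [prodMap_comp_ev h g₀ ev₀, prodMap_comp_ev k g₀ ev₀, hg₀,
        ← prodMap_comp_ev h z f, ← prodMap_comp_ev k z f, hhk])
    have e1 : t ≫ mI ≫ prod.fst = h ≫ g₀ := by
      rw [← Category.assoc, ht]; simp
    have e2 : t ≫ mI ≫ prod.snd = k ≫ g₀ := by
      rw [← Category.assoc, ht]; simp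
    calc h ≫ g₀ ≫ qW = (h ≫ g₀) ≫ qW := by rw [Category.assoc]
      _ = (t ≫ mI ≫ prod.fst) ≫ qW := by rw [e1]
      _ = t ≫ mI ≫ prod.fst ≫ qW := by simp only [Category.assoc]
      _ = t ≫ mI ≫ prod.snd ≫ qW := by rw [wq2]
      _ = (t ≫ mI ≫ prod.snd) ≫ qW := by simp only [Category.assoc]
      _ = (k ≫ g₀) ≫ qW := by rw [e2]
      _ = k ≫ g₀ ≫ qW := by rw [Category.assoc])
  have hgood : ∀ (g' : C ⟶ Q), z ≫ g' = g₀ ≫ qW → prod.map g' (𝟙 X) ≫ ev = f := by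
    intro g' hg'
    haveI := (regEpi_prodMap hE X hz).epi
    rw [← cancel_epi (prod.map z (𝟙 X))]
    calc prod.map z (𝟙 X) ≫ prod.map g' (𝟙 X) ≫ ev
        = prod.map (z ≫ g') (𝟙 X) ≫ ev := (prodMap_comp_ev z g' ev).symm
      _ = prod.map (g₀ ≫ qW) (𝟙 X) ≫ ev := by rw [hg']
      _ = prod.map g₀ (𝟙 X) ≫ prod.map qW (𝟙 X) ≫ ev := prodMap_comp_ev g₀ qW ev
      _ = prod.map g₀ (𝟙 X) ≫ ev₀ := by rw [hev]
      _ = prod.map z (𝟙 X) ≫ f := hg₀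
  refine ⟨g, hgood g hg, fun g' hg' => ?_⟩
  haveI := hz.epi
  rw [← cancel_epi z]
  obtain ⟨a, ha⟩ := hP.1 Z hZ qW hqW (z ≫ g')
  obtain ⟨a', ha'⟩ := hP.1 Z hZ qW hqW (z ≫ g)
  have key : ∀ (b : Z ⟶ W₀) (gc : C ⟶ Q), b ≫ qW = z ≫ gc →
      prod.map gc (𝟙 X) ≫ ev = f →
      prod.map b (𝟙 X) ≫ ev₀ = prod.map z (𝟙 X) ≫ f := by
    intro b gc hb hgc
    calc prod.map b (𝟙 X) ≫ ev₀
        = prod.map b (𝟙 X) ≫ prod.map qW (𝟙 X) ≫ ev := by rw [hev]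
      _ = prod.map (b ≫ qW) (𝟙 X) ≫ ev := (prodMap_comp_ev b qW ev).symm
      _ = prod.map (z ≫ gc) (𝟙 X) ≫ ev := by rw [hb]
      _ = prod.map z (𝟙 X) ≫ prod.map gc (𝟙 X) ≫ ev := prodMap_comp_ev z gc ev
      _ = prod.map z (𝟙 X) ≫ f := by rw [hgc]
  obtain ⟨t, ht⟩ := (char (prod.lift a a')).mp (by
    simp only [prod.lift_fst, prod.lift_snd]
    rw [key a g' ha hg', key a' g ha' (hgood g hg)])
  have e1 : t ≫ mI ≫ prod.fst = a := by rw [← Category.assoc, ht]; simp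
  have e2 : t ≫ mI ≫ prod.snd = a' := by rw [← Category.assoc, ht]; simp
  calc z ≫ g' = a ≫ qW := ha.symm
    _ = (t ≫ mI ≫ prod.fst) ≫ qW := by rw [e1]
    _ = t ≫ mI ≫ prod.fst ≫ qW := by simp only [Category.assoc]
    _ = t ≫ mI ≫ prod.snd ≫ qW := by rw [wq2]
    _ = (t ≫ mI ≫ prod.snd) ≫ qW := by simp only [Category.assoc]
    _ = a' ≫ qW := by rw [e2]
    _ = z ≫ g := ha'

end ExComp
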